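/- Let A and B be n×n complex matrices such that A is Hermitian, and both B − A and B + A are positive semidefinite. Then the real part of Tr(A·A·B) is at least Σ_{i=1}^n |λ_i|³, where λ_1,…,λ_n are the eigenvalues of A. -/

import Mathlib

open ComplexOrder Matrix

set_option maxHeartbeats 1600000

/-- Trace inequality: if `A` is Hermitian and `B ± A` are positive semidefinite, then
`Re Tr(A·A·B) ≥ Σᵢ |λᵢ|³` where the `λᵢ` are the eigenvalues of `A`. -/
theorem stmt_9 (n : ℕ) (A B : Matrix (Fin n) (Fin n) ℂ)
    (hA : A.IsHermitian) (h1 : (B - A).PosSemidef) (h2 : (B + A).PosSemidef) :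
    ∑ i, |hA.eigenvalues i| ^ 3 ≤ ((A * A * B).trace).re := by
  set U : Matrix (Fin n) (Fin n) ℂ := (hA.eigenvectorUnitary : Matrix (Fin n) (Fin n) ℂ) with hUdef
  set D : Matrix (Fin n) (Fin n) ℂ :=
    Matrix.diagonal (Complex.ofReal ∘ hA.eigenvalues) with hD
  have hU1 : star U * U = 1 := (Matrix.mem_unitaryGroup_iff').mp hA.eigenvectorUnitary.2
  have hU2 : U * star U = 1 := (Matrix.mem_unitaryGroup_iff).mp hA.eigenvectorUnitary.2
  have hspec : A = U * D * star U := hA.spectral_theorem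
  set C : Matrix (Fin n) (Fin n) ℂ := star U * B * U with hC
  -- quadratic form identity
  have hquad : ∀ (M : Matrix (Fin n) (Fin n) ℂ) (i : Fin n),
      (star U * M * U) i i = dotProduct (star fun j => U j i) (M *ᵥ fun j => U j i) := by
    intro M i
    simp only [Matrix.mul_apply, dotProduct, Matrix.mulVec, dotProduct,
      Pi.star_apply, Matrix.star_apply, Finset.mul_sum, Finset.sum_mul]
    rw [Finset.sum_comm]
    apply Finset.sum_congr rfl; intro j _
    apply Finset.sum_congr rfl; intro k _
    ring
  have hDdiag : star U * A * U = D := by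
    rw [hspec]; simp only [Matrix.mul_assoc]
    rw [hU1, Matrix.mul_one, ← Matrix.mul_assoc, hU1, Matrix.one_mul]
  -- C i i bounds
  have key : ∀ i, |hA.eigenvalues i| ≤ (C i i).re := by
    intro i
    have e1 := h1.dotProduct_mulVec_nonneg (fun j => U j i)
    have e2 := h2.dotProduct_mulVec_nonneg (fun j => U j i)
    rw [← hquad] at e1 e2
    have hsub : star U * (B - A) * U = C - D := by
      rw [hC, ← hDdiag]; noncomm_ring
    have hadd : star U * (B + A) * U = C + D := by
      rw [hC, ← hDdiag]; noncomm_ring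
    rw [hsub] at e1
    rw [hadd] at e2
    have hDii : D i i = (hA.eigenvalues i : ℂ) := by simp [hD]
    rw [Matrix.sub_apply, hDii] at e1
    rw [Matrix.add_apply, hDii] at e2
    rw [Complex.le_def] at e1 e2
    simp only [Complex.sub_re, Complex.add_re, Complex.ofReal_re, Complex.zero_re] at e1 e2
    rcases abs_cases (hA.eigenvalues i) with ⟨h, _⟩ | ⟨h, _⟩ <;> rw [h] <;> linarith [e1.1, e2.1]
  -- trace computation
  have hAA : A * A = U * (D * D) * star U := by
    rw [hspec]
    simp only [Matrix.mul_assoc]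
    rw [← Matrix.mul_assoc (star U) U, hU1, one_mul]
  have htr : (A * A * B).trace = (D * D * C).trace := by
    rw [hAA, hC, Matrix.mul_assoc (U * (D * D)) (star U) B,
      Matrix.trace_mul_cycle U (D * D) (star U * B),
      Matrix.trace_mul_cycle (star U * B) U (D * D)]
    congr 1
    simp only [Matrix.mul_assoc]
  have htrsum : (D * D * C).trace = ∑ i, ((hA.eigenvalues i : ℂ))^2 * C i i := by
    rw [Matrix.trace]
    apply Finset.sum_congr rfl; intro i _
    simp [Matrix.diag, hD, Matrix.mul_apply, Matrix.diagonal_apply, Finset.mul_sum, sq]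
  rw [htr, htrsum, Complex.re_sum]
  apply Finset.sum_le_sum
  intro i _
  have : (((hA.eigenvalues i : ℂ))^2 * C i i).re = (hA.eigenvalues i)^2 * (C i i).re := by
    simp [Complex.mul_re, ← Complex.ofReal_pow]
  rw [this]
  calc |hA.eigenvalues i| ^ 3 = (hA.eigenvalues i)^2 * |hA.eigenvalues i| := by
        rw [← sq_abs]; ring
    _ ≤ (hA.eigenvalues i)^2 * (C i i).re := by
        apply mul_le_mul_of_nonneg_left (key i) (sq_nonneg _)
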